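/- Let r_0 ≥ 32 and r, r' ∈ ℝ with |r| ≥ r_0 and |r'| ≥ r_0. Then |r| ≤ ‖T(r)‖ ≤ |r| (1 + r_0^{−2}) and |r' r| ≤ ‖T(r') T(r)‖ ≤ |r' r| (1 + 3 r_0^{−2}). -/

import Mathlib

open scoped Matrix.Norms.L2Operator

lemma euc_norm_eq' (v : Fin 2 → ℝ) :
    ‖(WithLp.equiv 2 (Fin 2 → ℝ)).symm v‖ = Real.sqrt (v 0 ^ 2 + v 1 ^ 2) := by
  rw [EuclideanSpace.norm_eq]
  simp [Fin.sum_univ_two, sq_abs]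

/-- Lower bound helper. -/
lemma lower_helper' (A : Matrix (Fin 2) (Fin 2) ℝ) (x : Fin 2 → ℝ) :
    Real.sqrt ((A.mulVec x 0) ^ 2 + (A.mulVec x 1) ^ 2) ≤
      ‖A‖ * Real.sqrt (x 0 ^ 2 + x 1 ^ 2) := by
  have h := A.l2_opNorm_mulVec ((WithLp.equiv 2 (Fin 2 → ℝ)).symm x)
  simpa [EuclideanSpace.norm_eq, Fin.sum_univ_two, Real.norm_eq_abs, sq_abs] using h

set_option maxHeartbeats 1000000 in
/-- Upper bound helper: Frobenius bound. -/
lemma upper_helper' (A : Matrix (Fin 2) (Fin 2) ℝ) :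
    ‖A‖ ≤ Real.sqrt (A 0 0 ^ 2 + A 0 1 ^ 2 + A 1 0 ^ 2 + A 1 1 ^ 2) := by
  rw [Matrix.l2_opNorm_def]
  refine ContinuousLinearMap.opNorm_le_bound _ (Real.sqrt_nonneg _) fun x => ?_
  obtain ⟨y, rfl⟩ : ∃ y : Fin 2 → ℝ, (WithLp.equiv 2 (Fin 2 → ℝ)).symm y = x :=
    ⟨WithLp.equiv 2 (Fin 2 → ℝ) x, rfl⟩
  have h1 : ((Matrix.toEuclideanLin ≪≫ₗ LinearMap.toContinuousLinearMap) A)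
        ((WithLp.equiv 2 (Fin 2 → ℝ)).symm y)
      = (WithLp.equiv 2 (Fin 2 → ℝ)).symm (A.mulVec y) := rfl
  rw [h1, euc_norm_eq', euc_norm_eq', ← Real.sqrt_mul (by positivity)]
  apply Real.sqrt_le_sqrt
  have e0 : A.mulVec y 0 = A 0 0 * y 0 + A 0 1 * y 1 := by
    simp [Matrix.mulVec, dotProduct, Fin.sum_univ_two]
  have e1 : A.mulVec y 1 = A 1 0 * y 0 + A 1 1 * y 1 := by
    simp [Matrix.mulVec, dotProduct, Fin.sum_univ_two]
  rw [e0, e1]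
  nlinarith [sq_nonneg (A 0 0 * y 1 - A 0 1 * y 0), sq_nonneg (A 1 0 * y 1 - A 1 1 * y 0)]

/-- The Schrödinger transfer matrix `T(a)` with rows `(a, -1)` and `(1, 0)`. -/
noncomputable def transferM (a : ℝ) : Matrix (Fin 2) (Fin 2) ℝ := !![a, -1; 1, 0]

lemma transferM_mul (r' r : ℝ) :
    transferM r' * transferM r = !![r' * r - 1, -r'; r, -1] := by
  ext i j
  fin_cases i <;> fin_cases j <;>
    simp [transferM, Matrix.mul_apply, Fin.sum_univ_two] <;> ring

set_option maxHeartbeats 1000000 in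
/-- **Norm estimates for transfer matrices** (Lemma 5.3). For `|r|, |r'| ≥ r₀ ≥ 32`:
`|r| ≤ ‖T(r)‖ ≤ |r| (1 + r₀⁻²)` and `|r' r| ≤ ‖T(r') T(r)‖ ≤ |r' r| (1 + 3 r₀⁻²)`. -/
theorem transfer_matrix_norm_estimates (r₀ r r' : ℝ) (hr₀ : 32 ≤ r₀)
    (hr : r₀ ≤ |r|) (hr' : r₀ ≤ |r'|) :
    |r| ≤ ‖transferM r‖ ∧ ‖transferM r‖ ≤ |r| * (1 + r₀⁻¹ ^ 2) ∧
    |r' * r| ≤ ‖transferM r' * transferM r‖ ∧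
    ‖transferM r' * transferM r‖ ≤ |r' * r| * (1 + 3 * r₀⁻¹ ^ 2) := by
  have hr0 : (0 : ℝ) < r₀ := by linarith
  have hs0 : (0 : ℝ) < r₀⁻¹ ^ 2 := by positivity
  have hs : r₀ ^ 2 * r₀⁻¹ ^ 2 = 1 := by field_simp
  have hr2 : r₀ ^ 2 ≤ r ^ 2 := by nlinarith [sq_abs r, abs_nonneg r]
  have hr'2 : r₀ ^ 2 ≤ r' ^ 2 := by nlinarith [sq_abs r', abs_nonneg r']
  have h1 : 1 ≤ r ^ 2 * r₀⁻¹ ^ 2 := by nlinarith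
  have h1' : 1 ≤ r' ^ 2 * r₀⁻¹ ^ 2 := by nlinarith
  have hr'ne : r' ≠ 0 := by
    intro h; rw [h] at hr'; simp at hr'; linarith
  have hq : r₀ ^ 2 ≤ |r' * r| := by
    rw [abs_mul]; nlinarith [abs_nonneg r, abs_nonneg r']
  have hqs : 1 ≤ |r' * r| * r₀⁻¹ ^ 2 := by nlinarith
  have h2 : |r' * r| ≤ (r' * r) ^ 2 * r₀⁻¹ ^ 2 := by
    nlinarith [sq_abs (r' * r), abs_nonneg (r' * r)]
  refine ⟨?_, ?_, ?_, ?_⟩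
  · -- |r| ≤ ‖T r‖
    have h := lower_helper' (transferM r) ![1, 0]
    have e0 : (transferM r).mulVec ![1, 0] 0 = r := by
      simp [transferM, Matrix.mulVec, dotProduct, Fin.sum_univ_two]
    have e1 : (transferM r).mulVec ![1, 0] 1 = 1 := by
      simp [transferM, Matrix.mulVec, dotProduct, Fin.sum_univ_two]
    rw [e0, e1] at h
    norm_num at h
    calc |r| = Real.sqrt (r ^ 2) := (Real.sqrt_sq_eq_abs r).symm
      _ ≤ Real.sqrt (r ^ 2 + 1) := Real.sqrt_le_sqrt (by linarith)
      _ ≤ ‖transferM r‖ := h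
  · -- upper bound single
    refine (upper_helper' (transferM r)).trans ?_
    have e : transferM r 0 0 ^ 2 + transferM r 0 1 ^ 2 + transferM r 1 0 ^ 2
        + transferM r 1 1 ^ 2 = r ^ 2 + 2 := by
      norm_num [transferM]
      ring
    rw [e, show |r| * (1 + r₀⁻¹ ^ 2)
        = Real.sqrt ((|r| * (1 + r₀⁻¹ ^ 2)) ^ 2) from (Real.sqrt_sq (by positivity)).symm]
    apply Real.sqrt_le_sqrt
    have e2 : (|r| * (1 + r₀⁻¹ ^ 2)) ^ 2 = r ^ 2 * (1 + r₀⁻¹ ^ 2) ^ 2 := by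
      rw [mul_pow, sq_abs]
    rw [e2]
    nlinarith [h1, sq_nonneg (r * r₀⁻¹ * r₀⁻¹)]
  · -- lower bound product
    rw [transferM_mul]
    rcases le_or_gt (r' * r) 0 with hsign | hsign
    · have h := lower_helper' !![r' * r - 1, -r'; r, -1] ![1, 0]
      have e0 : (!![r' * r - 1, -r'; r, -1]).mulVec ![1, 0] 0 = r' * r - 1 := by
        simp [Matrix.mulVec, dotProduct, Fin.sum_univ_two]
      have e1 : (!![r' * r - 1, -r'; r, -1]).mulVec ![1, 0] 1 = r := by
        simp [Matrix.mulVec, dotProduct, Fin.sum_univ_two]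
      rw [e0, e1] at h
      norm_num at h
      calc |r' * r| = Real.sqrt ((r' * r) ^ 2) := (Real.sqrt_sq_eq_abs _).symm
        _ ≤ Real.sqrt ((r' * r - 1) ^ 2 + r ^ 2) := Real.sqrt_le_sqrt (by nlinarith [sq_nonneg r])
        _ ≤ ‖!![r' * r - 1, -r'; r, -1]‖ := h
    · have h := lower_helper' !![r' * r - 1, -r'; r, -1] ![1, -r'⁻¹]
      have e0 : (!![r' * r - 1, -r'; r, -1]).mulVec ![1, -r'⁻¹] 0 = r' * r := by
        simp [Matrix.mulVec, dotProduct, Fin.sum_univ_two]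
        field_simp
        ring
      have e1 : (!![r' * r - 1, -r'; r, -1]).mulVec ![1, -r'⁻¹] 1 = r + r'⁻¹ := by
        simp [Matrix.mulVec, dotProduct, Fin.sum_univ_two]
      rw [e0, e1] at h
      have ex : ((![1, -r'⁻¹] : Fin 2 → ℝ) 0) ^ 2 + ((![1, -r'⁻¹] : Fin 2 → ℝ) 1) ^ 2
          = 1 + r'⁻¹ ^ 2 := by norm_num
      rw [ex] at h
      have hipos : (0 : ℝ) < r'⁻¹ ^ 2 := by positivity
      have hTpos : 0 < Real.sqrt (1 + r'⁻¹ ^ 2) := Real.sqrt_pos.2 (by positivity)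
      have key : |r' * r| * Real.sqrt (1 + r'⁻¹ ^ 2)
          ≤ Real.sqrt ((r' * r) ^ 2 + (r + r'⁻¹) ^ 2) := by
        rw [show |r' * r| = Real.sqrt ((r' * r) ^ 2) from (Real.sqrt_sq_eq_abs _).symm,
          ← Real.sqrt_mul (sq_nonneg _)]
        apply Real.sqrt_le_sqrt
        have eA : (r' * r) ^ 2 * r'⁻¹ ^ 2 = r ^ 2 := by field_simp
        have eB : r * r'⁻¹ = (r' * r) * r'⁻¹ ^ 2 := by field_simp
        nlinarith [eA, eB, mul_pos hsign hipos, sq_nonneg r'⁻¹]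
      exact le_of_mul_le_mul_right (key.trans h) hTpos
  · -- upper bound product
    rw [transferM_mul]
    refine (upper_helper' _).trans ?_
    have e : (!![r' * r - 1, -r'; r, -1] : Matrix (Fin 2) (Fin 2) ℝ) 0 0 ^ 2
        + (!![r' * r - 1, -r'; r, -1] : Matrix (Fin 2) (Fin 2) ℝ) 0 1 ^ 2
        + (!![r' * r - 1, -r'; r, -1] : Matrix (Fin 2) (Fin 2) ℝ) 1 0 ^ 2
        + (!![r' * r - 1, -r'; r, -1] : Matrix (Fin 2) (Fin 2) ℝ) 1 1 ^ 2
        = (r' * r - 1) ^ 2 + r' ^ 2 + r ^ 2 + 1 := by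
      norm_num
    rw [e, show |r' * r| * (1 + 3 * r₀⁻¹ ^ 2)
        = Real.sqrt ((|r' * r| * (1 + 3 * r₀⁻¹ ^ 2)) ^ 2) from
        (Real.sqrt_sq (by positivity)).symm]
    apply Real.sqrt_le_sqrt
    have e2 : (|r' * r| * (1 + 3 * r₀⁻¹ ^ 2)) ^ 2
        = (r' * r) ^ 2 * (1 + 3 * r₀⁻¹ ^ 2) ^ 2 := by
      rw [mul_pow, sq_abs]
    rw [e2]
    have h3 : r' ^ 2 ≤ (r' * r) ^ 2 * r₀⁻¹ ^ 2 := by nlinarith [sq_nonneg r']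
    have h4 : r ^ 2 ≤ (r' * r) ^ 2 * r₀⁻¹ ^ 2 := by nlinarith [sq_nonneg r]
    have h5 : (2 : ℝ) ≤ |r' * r| := by nlinarith
    have h6 : -2 * (r' * r) ≤ 2 * |r' * r| := by
      have := neg_abs_le (r' * r); linarith
    nlinarith [h2, h3, h4, h5, h6, sq_nonneg (r' * r * r₀⁻¹ * r₀⁻¹), hs0.le,
      mul_nonneg (sq_nonneg (r' * r)) hs0.le]
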